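/- Let c ∈ O, let t > 0, and let f : O → ℝ be defined by f(x) = |x−c|^t. Then V_Beer(f) = |α−c|^t + |β−c|^t, where α = s_0/(1−π) and β = s_{q−1}/(1−π). In particular 1 ≤ V_Beer(f) ≤ 2, with V_Beer(f) = 1 if and only if c = α or c = β. -/

import Mathlib

open MeasureTheory Set Filter Topology
open scoped ENNReal NNReal

noncomputable section

namespace NAKoksma

variable (K : Type*) [NontriviallyNormedField K] [IsUltrametricDist K]

/-- The ring of integers `O = {x : K | ‖x‖ ≤ 1}` of a non-Archimedean normed field. -/
def RoI : Subring K where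
  carrier := {x : K | ‖x‖ ≤ 1}
  mul_mem' := fun {a b} ha hb => by
    simp only [Set.mem_setOf_eq] at *
    calc ‖a * b‖ = ‖a‖ * ‖b‖ := norm_mul a b
      _ ≤ 1 * 1 := mul_le_mul ha hb (norm_nonneg b) zero_le_one
      _ = 1 := one_mul 1
  one_mem' := by simp
  add_mem' := fun {a b} ha hb => by
    simp only [Set.mem_setOf_eq] at *
    exact (IsUltrametricDist.norm_add_le_max a b).trans (max_le ha hb)
  zero_mem' := by simp
  neg_mem' := fun {a} ha => by
    simp only [Set.mem_setOf_eq, norm_neg] at *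
    exact ha

variable (q : ℕ)

/-- The disc of radius `q ^ (-n)` centered at `a` in the ring of integers. -/
def disc (a : RoI K) (n : ℕ) : Set (RoI K) :=
  {x : RoI K | ‖(x : K) - (a : K)‖ ≤ (q : ℝ) ^ (-(n : ℤ))}

/-- A subset of `O` is a disc if it is of the form `D_r(a)` with `r = q^(-n)`, `0 < r ≤ 1`. -/
def IsDisc (D : Set (RoI K)) : Prop := ∃ (a : RoI K) (n : ℕ), D = disc K q a n

/-- A Taibleson partition: a finite collection of discs partitioning `O`. -/
def IsTaibPartition (P : Finset (Set (RoI K))) : Prop :=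
  (∀ D ∈ P, IsDisc K q D) ∧ (P : Set (Set (RoI K))).PairwiseDisjoint id ∧
    ⋃₀ (P : Set (Set (RoI K))) = Set.univ

/-- `V_Π(f) = Σ_{D ∈ Π} sup_{x,y ∈ D} (f x - f y)`, valued in `[0,∞]`. -/
def VPi (f : RoI K → ℝ) (P : Finset (Set (RoI K))) : ℝ≥0∞ :=
  ∑ D ∈ P, ⨆ x ∈ D, ⨆ y ∈ D, ENNReal.ofReal (f x - f y)

/-- The Taibleson variation `V_Taib(f) = sup_Π V_Π(f)`. -/
def VTaib (f : RoI K → ℝ) : ℝ≥0∞ :=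
  ⨆ P : {P : Finset (Set (RoI K)) // IsTaibPartition K q P}, VPi K f P.1

variable [MeasurableSpace K]

/-- The discrepancy `Δ(X) = sup_D | |X ∩ D| / |X| - μ(D) |` of a finite set `X ⊆ O`. -/
def discrepancy (μ : Measure (RoI K)) (X : Finset (RoI K)) : ℝ :=
  ⨆ D : {D : Set (RoI K) // IsDisc K q D},
    |(Nat.card ↥((X : Set (RoI K)) ∩ D.1) : ℝ) / (X.card : ℝ) - (μ D.1).toReal|

variable (π : RoI K)

/-- The `i`-th point `m_i = a_0 + a_1 π + ⋯ + a_{λ-1} π^{λ-1}` in the dictionary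
ordering of the coefficient strings `(a_0, …, a_{λ-1})` with respect to the
indexing of the coset representatives `S`. -/
def beerPoint (S : ℕ → RoI K) (lam i : ℕ) : RoI K :=
  ∑ j ∈ Finset.range lam, S (i / q ^ (lam - 1 - j) % q) * π ^ j

/-- `V_λ(f) = sup_{x_i ∈ E_i} Σ_{i=1}^{q^λ - 1} |f(x_i) - f(x_{i-1})|` over the ordered Beer
partition `E_0, …, E_{q^λ - 1}` of level `λ`. -/
def VBeerLevel (S : ℕ → RoI K) (f : RoI K → ℝ) (lam : ℕ) : ℝ≥0∞ :=
  ⨆ x : {x : ℕ → RoI K // ∀ i < q ^ lam, x i ∈ disc K q (beerPoint K q π S lam i) lam},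
    ∑ i ∈ Finset.Ico 1 (q ^ lam), ENNReal.ofReal |f (x.1 i) - f (x.1 (i - 1))|

/-- The Beer variation `V_Beer(f) = lim_{λ→∞} V_λ(f) = sup_{λ ≥ 1} V_λ(f)`. -/
def VBeer (S : ℕ → RoI K) (f : RoI K → ℝ) : ℝ≥0∞ :=
  ⨆ lam : ℕ, VBeerLevel K q π S f (lam + 1)

/-- `S : ℕ → O` (through indices `0, …, q-1`) is a complete ordered system of coset
representatives for the residue field `O/πO`, containing `0`. -/
def IsRepSystem (S : ℕ → RoI K) : Prop :=
  (∃ i, i < q ∧ S i = 0) ∧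
    Function.Bijective fun i : Fin q => Ideal.Quotient.mk (Ideal.span {π}) (S (i : ℕ))

/-- The Berkovich-analytic variation
`V_Berk(f) = Σ_D Σ_{D' ≺ D} |f(D') - f(D)|`, where `D' ≺ D` means `D' ⊆ D` and
`μ(D') = μ(D)/q`, and `f(D)` denotes the average of `f` over `D`. -/
def VBerk (μ : Measure (RoI K)) (f : RoI K → ℝ) : ℝ≥0∞ :=
  ∑' D : {D : Set (RoI K) // IsDisc K q D},
    ∑' D' : {D' : Set (RoI K) // IsDisc K q D' ∧ D' ⊆ D.1 ∧ μ D' = μ D.1 / (q : ℝ≥0∞)},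
      ENNReal.ofReal |(⨍ x in D'.1, f x ∂μ) - ⨍ x in D.1, f x ∂μ|

/-- The level `ℓ(γ)` of a character `γ : O → 𝕋`: the least `ℓ ≥ 0` such that `γ` is trivial
on `π^ℓ O`. -/
def charLevel (γ : AddChar (RoI K) Circle) : ℕ :=
  sInf {l : ℕ | ∀ y : RoI K, γ (π ^ l * y) = 1}

/-- The Fourier coefficient `f̂(γ) = ∫_O f(x) conj(γ(x)) dμ(x)`. -/
def fourierCoeff (μ : Measure (RoI K)) (f : RoI K → ℂ) (γ : AddChar (RoI K) Circle) : ℂ :=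
  ∫ x, f x * (starRingEnd ℂ) ((γ x : Circle) : ℂ) ∂μ

/-- The Fourier-analytic variation `V_Fourier(f) = Σ_{γ ≠ γ₀} q^{ℓ(γ)} |f̂(γ)|`, the sum over
all nontrivial continuous characters of `O`. -/
def VFourier (μ : Measure (RoI K)) (f : RoI K → ℝ) : ℝ≥0∞ :=
  ∑' γ : {γ : AddChar (RoI K) Circle // Continuous ⇑γ ∧ γ ≠ 1},
    ENNReal.ofReal ((q : ℝ) ^ charLevel K π γ.1 * ‖fourierCoeff K μ (fun x => (f x : ℂ)) γ.1‖)

/-- A function is a finite linear combination of characteristic functions of discs. -/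
def IsDiscSimple (g : RoI K → ℝ) : Prop :=
  ∃ (P : Finset (Set (RoI K))) (c : Set (RoI K) → ℝ),
    (∀ D ∈ P, IsDisc K q D) ∧ g = fun x => ∑ D ∈ P, c D * D.indicator 1 x

/-- Integrability in the sense of Beer: `f` can be squeezed between finite linear combinations
of characteristic functions of discs with integrals converging to each other. -/
def BeerIntegrable [MeasurableSpace K] (μ : Measure (RoI K)) (f : RoI K → ℝ) : Prop :=
  ∃ u v : ℕ → RoI K → ℝ,
    (∀ n, IsDiscSimple K q (u n)) ∧ (∀ n, IsDiscSimple K q (v n)) ∧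
    (∀ n x, u n x ≤ f x ∧ f x ≤ v n x) ∧
    Tendsto (fun n => ∫ x, (v n x - u n x) ∂μ) atTop (𝓝 0)

variable [LocallyCompactSpace K] [BorelSpace K]
/-- Telescoping sum of |differences| for a sequence antitone on `[a,b]`. -/
lemma sum_abs_eq_of_anti (w : ℕ → ℝ) (a b : ℕ) (hab : a ≤ b)
    (h : ∀ i i', a ≤ i → i ≤ i' → i' ≤ b → w i' ≤ w i) :
    ∑ i ∈ Finset.Ico (a + 1) (b + 1), |w i - w (i - 1)| = w a - w b := by
  induction b, hab using Nat.le_induction with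
  | base => simp
  | succ b hab ih =>
    rw [Finset.sum_Ico_succ_top (by omega)]
    have h1 : w (b + 1) ≤ w b := h b (b + 1) hab (by omega) le_rfl
    have h2 : ∑ i ∈ Finset.Ico (a + 1) (b + 1), |w i - w (i - 1)| = w a - w b :=
      ih fun i i' hi hii' hib => h i i' hi hii' (by omega)
    rw [h2]
    simp only [Nat.add_sub_cancel]
    rw [abs_of_nonpos (by linarith)]
    ring

lemma sum_abs_eq_of_mono (w : ℕ → ℝ) (a b : ℕ) (hab : a ≤ b)
    (h : ∀ i i', a ≤ i → i ≤ i' → i' ≤ b → w i ≤ w i') :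
    ∑ i ∈ Finset.Ico (a + 1) (b + 1), |w i - w (i - 1)| = w b - w a := by
  have := sum_abs_eq_of_anti (fun i => -w i) a b hab
    (fun i i' hi hii' hib => neg_le_neg (h i i' hi hii' hib))
  simp only [neg_sub_neg] at this
  rw [← this]
  refine Finset.sum_congr rfl fun i _ => ?_
  rw [abs_sub_comm]

/-- Total variation of a unimodal sequence. -/
lemma sum_abs_unimodal (w : ℕ → ℝ) (j n : ℕ) (hj : j ≤ n)
    (h1 : ∀ i i', i ≤ i' → i' ≤ j → w i' ≤ w i)
    (h2 : ∀ i i', j ≤ i → i ≤ i' → i' ≤ n → w i ≤ w i') :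
    ∑ i ∈ Finset.Ico 1 (n + 1), |w i - w (i - 1)| = (w 0 - w j) + (w n - w j) := by
  rw [← Finset.sum_Ico_consecutive _ (by omega : 1 ≤ j + 1) (by omega : j + 1 ≤ n + 1)]
  rw [sum_abs_eq_of_anti w 0 j (by omega) (fun i i' _ => h1 i i'),
    sum_abs_eq_of_mono w j n hj h2]

section Ultra
variable {K : Type*} [NontriviallyNormedField K] [IsUltrametricDist K]

lemma norm_eq_of_norm_sub_lt {a b : K} (h : ‖a - b‖ < ‖b‖) : ‖a‖ = ‖b‖ := by
  have h1 : ‖a‖ ≤ ‖b‖ := by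
    have := IsUltrametricDist.norm_add_le_max (b) (a - b)
    simpa [max_le_iff] using this.trans (max_le le_rfl h.le)
  refine le_antisymm h1 ?_
  by_contra hlt
  push_neg at hlt
  have := IsUltrametricDist.norm_add_le_max (a) (b - a)
  simp only [add_sub_cancel] at this
  rcases max_cases ‖a‖ ‖b - a‖ with ⟨he, _⟩ | ⟨he, _⟩
  · rw [he] at this; exact absurd this (not_le.mpr hlt)
  · rw [he, norm_sub_rev] at this; exact absurd (lt_of_le_of_lt this h) (lt_irrefl _)

lemma norm_add_eq_of_lt {a b : K} (h : ‖b‖ < ‖a‖) : ‖a + b‖ = ‖a‖ := by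
  have : ‖a + b - a‖ < ‖a‖ := by simpa using h
  exact norm_eq_of_norm_sub_lt this

end Ultra
/-- Nat: digits from truncated quotients. -/
lemma nat_digit_eq_of_div_eq {q i j lam k r : ℕ} (hk : k ≤ lam) (hr : r < k)
    (h : i / q ^ (lam - k) = j / q ^ (lam - k)) :
    i / q ^ (lam - 1 - r) % q = j / q ^ (lam - 1 - r) % q := by
  have e : lam - 1 - r = (lam - k) + (k - 1 - r) := by omega
  rw [e, pow_add, ← Nat.div_div_eq_div_mul, ← Nat.div_div_eq_div_mul, h]

lemma nat_digit_ne {q i j lam k : ℕ} (hk : k < lam)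
    (h : i / q ^ (lam - k) = j / q ^ (lam - k))
    (h' : i / q ^ (lam - (k + 1)) ≠ j / q ^ (lam - (k + 1))) :
    i / q ^ (lam - 1 - k) % q ≠ j / q ^ (lam - 1 - k) % q := by
  have e : lam - 1 - k = lam - (k + 1) := by omega
  rw [e]
  intro hmod
  apply h'
  have ed : ∀ m : ℕ, m / q ^ (lam - (k+1)) / q = m / q ^ (lam - k) := by
    intro m
    rw [Nat.div_div_eq_div_mul, ← pow_succ]
    congr 2
    omega
  have hi := Nat.div_add_mod (i / q ^ (lam - (k+1))) q
  have hj' := Nat.div_add_mod (j / q ^ (lam - (k+1))) q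
  rw [ed i] at hi
  rw [ed j] at hj'
  rw [← hi, ← hj', h, hmod]


section Helpers

variable {S : ℕ → RoI K}

lemma norm_coe_le_one (x : RoI K) : ‖(x : K)‖ ≤ 1 := x.2

lemma norm_coe_sub_le_one (x y : RoI K) : ‖(x : K) - (y : K)‖ ≤ 1 := by
  rw [sub_eq_add_neg]
  refine (IsUltrametricDist.norm_add_le_max _ _).trans (max_le x.2 ?_)
  rw [norm_neg]
  exact y.2

lemma norm_S_sub_S (hq : 1 < q) (hπ : ‖(π : K)‖ = (q : ℝ)⁻¹)
    (hunif : ∀ x : RoI K, ‖(x : K)‖ < 1 → ‖(x : K)‖ ≤ ‖(π : K)‖)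
    (hS : IsRepSystem K q π S) {a b : ℕ} (ha : a < q) (hb : b < q) (hab : a ≠ b) :
    ‖(S a : K) - (S b : K)‖ = 1 := by
  have hq0 : (0 : ℝ) < q := by positivity
  have hπpos : (0 : ℝ) < ‖(π : K)‖ := by rw [hπ]; positivity
  have hπ0 : (π : K) ≠ 0 := by
    intro h
    rw [h, norm_zero] at hπpos
    exact lt_irrefl _ hπpos
  refine le_antisymm (norm_coe_sub_le_one K (S a) (S b)) ?_
  by_contra hlt
  push_neg at hlt
  have h1 : ‖((S a - S b : RoI K) : K)‖ < 1 := by push_cast; exact hlt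
  have h2 := hunif _ h1
  have h2' : ‖(S a : K) - (S b : K)‖ ≤ ‖(π : K)‖ := by
    rw [show ((S a - S b : RoI K) : K) = (S a : K) - (S b : K) by push_cast; ring] at h2
    exact h2
  have h3 : ‖((S a : K) - S b) / (π : K)‖ ≤ 1 := by
    rw [norm_div, div_le_one hπpos]
    exact h2'
  set y : RoI K := ⟨((S a : K) - S b) / π, h3⟩ with hy
  have hdvd : (S a - S b : RoI K) = π * y := by
    apply Subtype.ext
    push_cast [hy]
    field_simp
  have hmem : (S a : RoI K) - S b ∈ Ideal.span {π} :=
    Ideal.mem_span_singleton.mpr ⟨y, hdvd⟩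
  have heq : (Ideal.Quotient.mk (Ideal.span {π})) (S a) =
      (Ideal.Quotient.mk (Ideal.span {π})) (S b) := Ideal.Quotient.eq.mpr hmem
  have hinj := hS.2.1
  have : (⟨a, ha⟩ : Fin q) = ⟨b, hb⟩ := hinj heq
  exact hab (congrArg Fin.val this)

lemma beerPoint_coe (lam i : ℕ) :
    ((beerPoint K q π S lam i : RoI K) : K) =
      ∑ r ∈ Finset.range lam, (S (i / q ^ (lam - 1 - r) % q) : K) * (π : K) ^ r := by
  simp [beerPoint]

lemma beerPoint_sub_coe (lam i j : ℕ) :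
    (beerPoint K q π S lam i : K) - (beerPoint K q π S lam j : K) =
      ∑ r ∈ Finset.range lam,
        ((S (i / q ^ (lam - 1 - r) % q) : K) - (S (j / q ^ (lam - 1 - r) % q) : K))
          * (π : K) ^ r := by
  rw [beerPoint_coe, beerPoint_coe, ← Finset.sum_sub_distrib]
  exact Finset.sum_congr rfl fun r _ => by ring

lemma norm_beerPoint_sub_le (hq : 1 < q) (hπ : ‖(π : K)‖ = (q : ℝ)⁻¹)
    {lam i j k : ℕ} (hk : k ≤ lam) (h : i / q ^ (lam - k) = j / q ^ (lam - k)) :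
    ‖(beerPoint K q π S lam i : K) - beerPoint K q π S lam j‖ ≤ ((q : ℝ)⁻¹) ^ k := by
  have hq0 : (0 : ℝ) < q := by positivity
  rw [beerPoint_sub_coe]
  refine IsUltrametricDist.norm_sum_le_of_forall_le_of_nonneg (by positivity) ?_
  intro r _
  rcases lt_or_ge r k with h1 | h1
  · rw [nat_digit_eq_of_div_eq hk h1 h]
    simp only [sub_self, zero_mul, norm_zero]
    positivity
  · rw [norm_mul, norm_pow, hπ]
    calc ‖(S (i / q ^ (lam - 1 - r) % q) : K) - (S (j / q ^ (lam - 1 - r) % q) : K)‖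
          * ((q:ℝ)⁻¹) ^ r
        ≤ 1 * ((q:ℝ)⁻¹) ^ r :=
          mul_le_mul_of_nonneg_right (norm_coe_sub_le_one K _ _) (by positivity)
      _ = ((q:ℝ)⁻¹) ^ r := one_mul _
      _ ≤ ((q:ℝ)⁻¹) ^ k := by
          refine pow_le_pow_of_le_one (by positivity) ?_ h1
          rw [inv_le_one_iff₀]
          right
          exact_mod_cast hq.le

lemma norm_beerPoint_sub_eq (hq : 1 < q) (hπ : ‖(π : K)‖ = (q : ℝ)⁻¹)
    (hunif : ∀ x : RoI K, ‖(x : K)‖ < 1 → ‖(x : K)‖ ≤ ‖(π : K)‖)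
    (hS : IsRepSystem K q π S) {lam i j k : ℕ} (hk : k < lam)
    (h : i / q ^ (lam - k) = j / q ^ (lam - k))
    (h' : i / q ^ (lam - (k + 1)) ≠ j / q ^ (lam - (k + 1))) :
    ‖(beerPoint K q π S lam i : K) - beerPoint K q π S lam j‖ = ((q : ℝ)⁻¹) ^ k := by
  have hq0 : (0 : ℝ) < q := by positivity
  have hqinv1 : ((q : ℝ)⁻¹) < 1 := by
    rw [inv_lt_one_iff₀]; right; exact_mod_cast hq
  have hdig : i / q ^ (lam - 1 - k) % q ≠ j / q ^ (lam - 1 - k) % q :=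
    nat_digit_ne hk h h'
  have hfk : ‖(S (i / q ^ (lam - 1 - k) % q) : K) - (S (j / q ^ (lam - 1 - k) % q) : K)‖ = 1 :=
    norm_S_sub_S K q π hq hπ hunif hS (Nat.mod_lt _ (by omega)) (Nat.mod_lt _ (by omega)) hdig
  have hnormk : ‖((S (i / q ^ (lam - 1 - k) % q) : K) - (S (j / q ^ (lam - 1 - k) % q) : K))
      * (π : K) ^ k‖ = ((q:ℝ)⁻¹) ^ k := by
    rw [norm_mul, hfk, norm_pow, hπ, one_mul]
  have hrest : ‖∑ r ∈ (Finset.range lam).erase k,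
      ((S (i / q ^ (lam - 1 - r) % q) : K) - (S (j / q ^ (lam - 1 - r) % q) : K))
        * (π : K) ^ r‖ ≤ ((q:ℝ)⁻¹) ^ (k + 1) := by
    refine IsUltrametricDist.norm_sum_le_of_forall_le_of_nonneg (by positivity) ?_
    intro r hr
    rw [Finset.mem_erase, Finset.mem_range] at hr
    rcases lt_or_ge r k with h1 | h1
    · rw [nat_digit_eq_of_div_eq hk.le h1 h]
      simp only [sub_self, zero_mul, norm_zero]
      positivity
    · have h2 : k + 1 ≤ r := lt_of_le_of_ne h1 (Ne.symm hr.1)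
      rw [norm_mul, norm_pow, hπ]
      calc ‖(S (i / q ^ (lam - 1 - r) % q) : K) - (S (j / q ^ (lam - 1 - r) % q) : K)‖
            * ((q:ℝ)⁻¹) ^ r
          ≤ 1 * ((q:ℝ)⁻¹) ^ r :=
            mul_le_mul_of_nonneg_right (norm_coe_sub_le_one K _ _) (by positivity)
        _ = ((q:ℝ)⁻¹) ^ r := one_mul _
        _ ≤ ((q:ℝ)⁻¹) ^ (k + 1) := pow_le_pow_of_le_one (by positivity) hqinv1.le h2
  rw [beerPoint_sub_coe,
    ← Finset.sum_erase_add _ _ (Finset.mem_range.mpr hk), add_comm]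
  rw [norm_add_eq_of_lt (by
    rw [hnormk]
    exact lt_of_le_of_lt hrest
      (pow_lt_pow_right_of_lt_one₀ (by positivity) hqinv1 (Nat.lt_succ_self k))), hnormk]

lemma exists_level (hq : 1 < q) (hπ : ‖(π : K)‖ = (q : ℝ)⁻¹)
    (hunif : ∀ x : RoI K, ‖(x : K)‖ < 1 → ‖(x : K)‖ ≤ ‖(π : K)‖)
    (hS : IsRepSystem K q π S) {lam i j : ℕ} (hi : i < q ^ lam) (hj : j < q ^ lam)
    (hne : i ≠ j) :
    ∃ k, k < lam ∧ i / q ^ (lam - k) = j / q ^ (lam - k) ∧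
      ‖(beerPoint K q π S lam i : K) - beerPoint K q π S lam j‖ = ((q : ℝ)⁻¹) ^ k := by
  classical
  set P : ℕ → Prop := fun k => i / q ^ (lam - k) = j / q ^ (lam - k) with hP
  have P0 : P 0 := by
    simp only [hP, Nat.sub_zero]
    rw [Nat.div_eq_of_lt hi, Nat.div_eq_of_lt hj]
  set k0 := Nat.findGreatest P lam with hk0
  have hspec : P k0 := Nat.findGreatest_spec (Nat.zero_le lam) P0
  have hle : k0 ≤ lam := Nat.findGreatest_le lam
  have hlt : k0 < lam := by
    rcases lt_or_eq_of_le hle with h | h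
    · exact h
    · exfalso
      rw [h] at hspec
      simp only [hP, Nat.sub_self, pow_zero, Nat.div_one] at hspec
      exact hne hspec
  have hnot : ¬ P (k0 + 1) := Nat.findGreatest_is_greatest (Nat.lt_succ_self k0) (by omega)
  exact ⟨k0, hlt, hspec, norm_beerPoint_sub_eq K q π hq hπ hunif hS hlt hspec hnot⟩

end Helpers
section Helpers2

variable {S : ℕ → RoI K}

/-- Strict separation of distinct Beer discs. -/
lemma lt_norm_beerPoint_sub (hq : 1 < q) (hπ : ‖(π : K)‖ = (q : ℝ)⁻¹)
    (hunif : ∀ x : RoI K, ‖(x : K)‖ < 1 → ‖(x : K)‖ ≤ ‖(π : K)‖)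
    (hS : IsRepSystem K q π S) {lam i j : ℕ} (hi : i < q ^ lam) (hj : j < q ^ lam)
    (hne : i ≠ j) :
    ((q : ℝ)⁻¹) ^ lam < ‖(beerPoint K q π S lam i : K) - beerPoint K q π S lam j‖ := by
  obtain ⟨k, hk, -, hnorm⟩ := exists_level K q π hq hπ hunif hS hi hj hne
  rw [hnorm]
  refine pow_lt_pow_right_of_lt_one₀ (by positivity) ?_ hk
  rw [inv_lt_one_iff₀]; right; exact_mod_cast hq

/-- Perturbation: points in distinct Beer discs are at the same distance as the centers. -/
lemma norm_pert (hq : 1 < q) (hπ : ‖(π : K)‖ = (q : ℝ)⁻¹)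
    (hunif : ∀ x : RoI K, ‖(x : K)‖ < 1 → ‖(x : K)‖ ≤ ‖(π : K)‖)
    (hS : IsRepSystem K q π S) {lam i j : ℕ} (hi : i < q ^ lam) (hj : j < q ^ lam)
    (hne : i ≠ j) {u v : K}
    (hu : ‖u - beerPoint K q π S lam i‖ ≤ ((q : ℝ)⁻¹) ^ lam)
    (hv : ‖v - beerPoint K q π S lam j‖ ≤ ((q : ℝ)⁻¹) ^ lam) :
    ‖u - v‖ = ‖(beerPoint K q π S lam i : K) - beerPoint K q π S lam j‖ := by
  refine norm_eq_of_norm_sub_lt ?_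
  refine lt_of_le_of_lt ?_ (lt_norm_beerPoint_sub K q π hq hπ hunif hS hi hj hne)
  have : u - v - ((beerPoint K q π S lam i : K) - beerPoint K q π S lam j)
      = (u - beerPoint K q π S lam i) + -(v - beerPoint K q π S lam j) := by ring
  rw [this]
  refine (IsUltrametricDist.norm_add_le_max _ _).trans (max_le hu ?_)
  rw [norm_neg]; exact hv

/-- Sandwich monotonicity towards `j` from the left. -/
lemma norm_beerPoint_anti (hq : 1 < q) (hπ : ‖(π : K)‖ = (q : ℝ)⁻¹)
    (hunif : ∀ x : RoI K, ‖(x : K)‖ < 1 → ‖(x : K)‖ ≤ ‖(π : K)‖)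
    (hS : IsRepSystem K q π S) {lam i i' j : ℕ} (hii' : i ≤ i') (hi'j : i' ≤ j)
    (hj : j < q ^ lam) :
    ‖(beerPoint K q π S lam i' : K) - beerPoint K q π S lam j‖ ≤
      ‖(beerPoint K q π S lam i : K) - beerPoint K q π S lam j‖ := by
  rcases eq_or_ne i j with rfl | hne
  · have : i' = i := le_antisymm hi'j hii'
    rw [this]
  · obtain ⟨k, hk, hagree, hnorm⟩ := exists_level K q π hq hπ hunif hS
      (lt_of_le_of_lt (hii'.trans hi'j) hj) hj hne
    rw [hnorm]
    rcases eq_or_ne i' j with rfl | hne'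
    · simp only [sub_self, norm_zero]
      positivity
    · refine norm_beerPoint_sub_le K q π hq hπ hk.le ?_
      have h1 : i / q ^ (lam - k) ≤ i' / q ^ (lam - k) := Nat.div_le_div_right hii'
      have h2 : i' / q ^ (lam - k) ≤ j / q ^ (lam - k) := Nat.div_le_div_right hi'j
      omega

/-- Sandwich monotonicity away from `j` on the right. -/
lemma norm_beerPoint_mono (hq : 1 < q) (hπ : ‖(π : K)‖ = (q : ℝ)⁻¹)
    (hunif : ∀ x : RoI K, ‖(x : K)‖ < 1 → ‖(x : K)‖ ≤ ‖(π : K)‖)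
    (hS : IsRepSystem K q π S) {lam i i' j : ℕ} (hji : j ≤ i) (hii' : i ≤ i')
    (hi' : i' < q ^ lam) :
    ‖(beerPoint K q π S lam i : K) - beerPoint K q π S lam j‖ ≤
      ‖(beerPoint K q π S lam i' : K) - beerPoint K q π S lam j‖ := by
  rcases eq_or_ne i' j with rfl | hne
  · have : i = i' := le_antisymm hii' hji
    rw [this]
  · obtain ⟨k, hk, hagree, hnorm⟩ := exists_level K q π hq hπ hunif hS hi'
      (lt_of_le_of_lt (hji.trans hii') hi') hne
    rw [hnorm]
    rcases eq_or_ne i j with rfl | hne'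
    · simp only [sub_self, norm_zero]
      positivity
    · refine norm_beerPoint_sub_le K q π hq hπ hk.le ?_
      have h1 : j / q ^ (lam - k) ≤ i / q ^ (lam - k) := Nat.div_le_div_right hji
      have h2 : i / q ^ (lam - k) ≤ i' / q ^ (lam - k) := Nat.div_le_div_right hii'
      omega

/-- Recursive structure of Beer points. -/
lemma beerPoint_rec (hq : 1 < q) {a j' n : ℕ} (ha : a < q) (hj' : j' < q ^ n) :
    beerPoint K q π S (n + 1) (a * q ^ n + j') = S a + π * beerPoint K q π S n j' := by
  have hq0 : 0 < q := by omega
  unfold beerPoint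
  rw [Finset.sum_range_succ']
  have h0 : (a * q ^ n + j') / q ^ (n + 1 - 1 - 0) % q = a := by
    rw [show n + 1 - 1 - 0 = n from by omega, mul_comm a,
      Nat.mul_add_div (Nat.pow_pos (n := n) hq0), Nat.div_eq_of_lt hj', Nat.add_zero,
      Nat.mod_eq_of_lt ha]
  rw [h0]
  have hterm : ∀ r ∈ Finset.range n,
      S ((a * q ^ n + j') / q ^ (n + 1 - 1 - (r + 1)) % q) * π ^ (r + 1)
        = π * (S (j' / q ^ (n - 1 - r) % q) * π ^ r) := by
    intro r hr
    rw [Finset.mem_range] at hr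
    have e1 : n + 1 - 1 - (r + 1) = n - 1 - r := by omega
    have e2 : n = (n - 1 - r) + (r + 1) := by omega
    have hdvd : q ^ (n - 1 - r) ∣ a * q ^ n :=
      (pow_dvd_pow q (by omega : n - 1 - r ≤ n)).mul_left a
    have e3 : a * q ^ n / q ^ (n - 1 - r) = a * q ^ (r + 1) := by
      rw [Nat.mul_div_assoc a (pow_dvd_pow q (by omega : n - 1 - r ≤ n)),
        Nat.pow_div (by omega) hq0, show n - (n - 1 - r) = r + 1 from by omega]
    have e4 : (a * q ^ n + j') / q ^ (n - 1 - r) % q = j' / q ^ (n - 1 - r) % q := by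
      rw [Nat.add_div_of_dvd_right hdvd, e3, add_comm, pow_succ, ← mul_assoc,
        Nat.add_mul_mod_self_right]
    rw [e1, e4]
    ring
  rw [Finset.sum_congr rfl hterm, ← Finset.mul_sum, pow_zero, mul_one, add_comm]

/-- Existence of the Beer index of a point (digit expansion). -/
lemma exists_beer_index (hq : 1 < q) (hπ : ‖(π : K)‖ = (q : ℝ)⁻¹)
    (hS : IsRepSystem K q π S) (lam : ℕ) (c : RoI K) :
    ∃ j < q ^ lam, ‖(c : K) - beerPoint K q π S lam j‖ ≤ ((q : ℝ)⁻¹) ^ lam := by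
  induction lam generalizing c with
  | zero =>
    refine ⟨0, by simp, ?_⟩
    have hz : (beerPoint K q π S 0 0 : K) = 0 := by simp [beerPoint]
    rw [hz, sub_zero, pow_zero]
    exact c.2
  | succ n ih =>
    obtain ⟨a, ha⟩ := hS.2.2 ((Ideal.Quotient.mk (Ideal.span {π})) c)
    have hmem : (S a : RoI K) - c ∈ Ideal.span {π} := Ideal.Quotient.eq.mp ha
    obtain ⟨z, hz⟩ := Ideal.mem_span_singleton.mp hmem
    obtain ⟨j', hj', hnorm⟩ := ih (-z)
    refine ⟨a * q ^ n + j', ?_, ?_⟩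
    · calc (a : ℕ) * q ^ n + j' < a * q ^ n + q ^ n := by omega
        _ = ((a : ℕ) + 1) * q ^ n := by ring
        _ ≤ q * q ^ n := Nat.mul_le_mul_right _ a.2
        _ = q ^ (n + 1) := (pow_succ' q n).symm
    · rw [beerPoint_rec K q π hq a.2 hj']
      have hc : (c : K) = (S a : K) + (π : K) * ((-z : RoI K) : K) := by
        have h := congrArg (fun x : RoI K => (x : K)) hz
        push_cast at h ⊢
        linear_combination -h
      have key : (c : K) - ((S (a : ℕ) + π * beerPoint K q π S n j' : RoI K) : K)
          = (π : K) * (((-z : RoI K) : K) - (beerPoint K q π S n j' : K)) := by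
        rw [hc]; push_cast; ring
      rw [key, norm_mul, hπ, pow_succ']
      exact mul_le_mul_of_nonneg_left hnorm (by positivity)

end Helpers2
section Helpers3

variable {S : ℕ → RoI K}

lemma norm_one_sub_pi (hq : 1 < q) (hπ : ‖(π : K)‖ = (q : ℝ)⁻¹) :
    ‖(1 : K) - (π : K)‖ = 1 := by
  rw [sub_eq_add_neg, norm_add_eq_of_lt, norm_one]
  rw [norm_neg, norm_one, hπ, inv_lt_one_iff₀]
  right; exact_mod_cast hq

lemma one_sub_pi_ne (hq : 1 < q) (hπ : ‖(π : K)‖ = (q : ℝ)⁻¹) : (1 : K) - (π : K) ≠ 0 := by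
  intro h
  have := norm_one_sub_pi K q π hq hπ
  rw [h, norm_zero] at this
  norm_num at this

/-- A constant-digit Beer point. -/
lemma beerPoint_const {lam i : ℕ} {a : ℕ} (hdig : ∀ r < lam, i / q ^ (lam - 1 - r) % q = a) :
    (beerPoint K q π S lam i : K) = (S a : K) * ∑ r ∈ Finset.range lam, (π : K) ^ r := by
  rw [beerPoint_coe, Finset.mul_sum]
  refine Finset.sum_congr rfl fun r hr => ?_
  rw [Finset.mem_range] at hr
  rw [hdig r hr]

/-- Distance from `S a / (1 - π)` to a constant-digit Beer point. -/
lemma norm_fixedPoint_sub (hq : 1 < q) (hπ : ‖(π : K)‖ = (q : ℝ)⁻¹) {lam i a : ℕ}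
    (hdig : ∀ r < lam, i / q ^ (lam - 1 - r) % q = a) :
    ‖(S a : K) / (1 - (π : K)) - beerPoint K q π S lam i‖ ≤ ((q : ℝ)⁻¹) ^ lam := by
  have hne := one_sub_pi_ne K q π hq hπ
  have hgeom : (1 - (π : K)) * ∑ r ∈ Finset.range lam, (π : K) ^ r = 1 - (π : K) ^ lam := by
    have h := geom_sum_mul ((π : K)) lam
    linear_combination -h
  have hsum : (S a : K) * ∑ r ∈ Finset.range lam, (π : K) ^ r
      = ((S a : K) * (1 - (π : K) ^ lam)) / (1 - (π : K)) := by
    rw [eq_div_iff hne]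
    linear_combination (S a : K) * hgeom
  have key : (S a : K) / (1 - (π : K)) - (beerPoint K q π S lam i : K)
      = (S a : K) * (π : K) ^ lam / (1 - (π : K)) := by
    rw [beerPoint_const K q π hdig, hsum, div_sub_div_same]
    congr 1
    ring
  rw [key, norm_div, norm_mul, norm_pow, hπ, norm_one_sub_pi K q π hq hπ, div_one]
  calc ‖(S a : K)‖ * ((q:ℝ)⁻¹) ^ lam ≤ 1 * ((q:ℝ)⁻¹) ^ lam :=
        mul_le_mul_of_nonneg_right (norm_coe_le_one K _) (by positivity)
    _ = ((q:ℝ)⁻¹) ^ lam := one_mul _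

lemma digits_zero {lam r : ℕ} (hr : r < lam) : 0 / q ^ (lam - 1 - r) % q = 0 := by
  simp

lemma digits_last (hq : 1 < q) {lam r : ℕ} (hr : r < lam) :
    (q ^ lam - 1) / q ^ (lam - 1 - r) % q = q - 1 := by
  have hq0 : 0 < q := by omega
  set m := lam - 1 - r with hm
  have hp1 : 1 ≤ q ^ m := Nat.one_le_pow _ _ hq0
  have hp2 : 1 ≤ q ^ (lam - m) := Nat.one_le_pow _ _ hq0
  have hsplit : q ^ lam = q ^ m * q ^ (lam - m) := by
    rw [← pow_add]; congr 1; omega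
  have e : q ^ m * (q ^ (lam - m) - 1) + q ^ m = q ^ m * q ^ (lam - m) := by
    calc q ^ m * (q ^ (lam - m) - 1) + q ^ m = q ^ m * ((q ^ (lam - m) - 1) + 1) := by ring
      _ = q ^ m * q ^ (lam - m) := by rw [Nat.sub_add_cancel hp2]
  have hdiv : (q ^ lam - 1) / q ^ m = q ^ (lam - m) - 1 := by
    refine Nat.div_eq_of_lt_le ?_ ?_
    · rw [mul_comm]
      omega
    · rw [Nat.sub_add_cancel hp2, mul_comm]
      omega
  rw [hdiv]
  set s := lam - m with hs'
  have hs : 1 ≤ s := by omega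
  have hQ : 1 ≤ q ^ (s - 1) := Nat.one_le_pow _ _ hq0
  have hqs : q ^ s = q * q ^ (s - 1) := by
    rw [← pow_succ']
    congr 1
    omega
  have e2 : q * (q ^ (s - 1) - 1) + q = q * q ^ (s - 1) := by
    calc q * (q ^ (s - 1) - 1) + q = q * ((q ^ (s - 1) - 1) + 1) := by ring
      _ = q * q ^ (s - 1) := by rw [Nat.sub_add_cancel hQ]
  have hrep : q ^ s - 1 = q * (q ^ (s - 1) - 1) + (q - 1) := by omega
  rw [hrep, Nat.mul_add_mod, Nat.mod_eq_of_lt (by omega)]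

end Helpers3
section Core

variable {S : ℕ → RoI K}

lemma mem_disc_iff {lam : ℕ} {a x : RoI K} :
    x ∈ disc K q a lam ↔ ‖(x : K) - (a : K)‖ ≤ ((q : ℝ)⁻¹) ^ lam := by
  rw [disc, Set.mem_setOf_eq, zpow_neg, zpow_natCast, inv_pow]

lemma sum_abs_f_eq (hq : 1 < q) (hπ : ‖(π : K)‖ = (q : ℝ)⁻¹)
    (hunif : ∀ x : RoI K, ‖(x : K)‖ < 1 → ‖(x : K)‖ ≤ ‖(π : K)‖)
    (hS : IsRepSystem K q π S) (c : RoI K) (t : ℝ) (ht : 0 < t)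
    {lam : ℕ} {j : ℕ} (hj : j < q ^ lam)
    (hcj : ‖(c : K) - beerPoint K q π S lam j‖ ≤ ((q : ℝ)⁻¹) ^ lam)
    (x : ℕ → RoI K) (hx : ∀ i < q ^ lam, x i ∈ disc K q (beerPoint K q π S lam i) lam) :
    ∑ i ∈ Finset.Ico 1 (q ^ lam),
        ENNReal.ofReal |‖(x i : K) - (c : K)‖ ^ t - ‖(x (i - 1) : K) - (c : K)‖ ^ t|
      = ENNReal.ofReal ((‖(x 0 : K) - (c : K)‖ ^ t - ‖(x j : K) - (c : K)‖ ^ t)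
          + (‖(x (q ^ lam - 1) : K) - (c : K)‖ ^ t - ‖(x j : K) - (c : K)‖ ^ t)) := by
  have hpow : 1 ≤ q ^ lam := Nat.one_le_pow _ _ (by omega)
  set n := q ^ lam - 1 with hn
  have hn1 : n + 1 = q ^ lam := by omega
  have hjn : j ≤ n := by omega
  have hx' : ∀ i, i < q ^ lam →
      ‖((x i : K)) - beerPoint K q π S lam i‖ ≤ ((q : ℝ)⁻¹) ^ lam := by
    intro i hi
    exact (mem_disc_iff K q).mp (hx i hi)
  have hxj : ‖(x j : K) - (c : K)‖ ≤ ((q : ℝ)⁻¹) ^ lam := by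
    have e : (x j : K) - c = ((x j : K) - beerPoint K q π S lam j)
        + -((c : K) - beerPoint K q π S lam j) := by ring
    rw [e]
    refine (IsUltrametricDist.norm_add_le_max _ _).trans (max_le (hx' j hj) ?_)
    rw [norm_neg]; exact hcj
  have hval : ∀ i, i < q ^ lam → i ≠ j → ‖(x i : K) - (c : K)‖ =
      ‖(beerPoint K q π S lam i : K) - beerPoint K q π S lam j‖ :=
    fun i hi hne => norm_pert K q π hq hπ hunif hS hi hj hne (hx' i hi) hcj
  have hgt : ∀ i, i < q ^ lam → i ≠ j →
      ((q : ℝ)⁻¹) ^ lam < ‖(beerPoint K q π S lam i : K) - beerPoint K q π S lam j‖ :=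
    fun i hi hne => lt_norm_beerPoint_sub K q π hq hπ hunif hS hi hj hne
  have hnmono : ∀ i i', i ≤ i' → i' ≤ j → ‖(x i' : K) - c‖ ≤ ‖(x i : K) - c‖ := by
    intro i i' hii' hi'j
    rcases eq_or_lt_of_le hii' with rfl | hlt
    · exact le_rfl
    · have hij : i ≠ j := by omega
      have hi : i < q ^ lam := by omega
      rw [hval i hi hij]
      rcases eq_or_ne i' j with rfl | hne'
      · exact hxj.trans (hgt i hi hij).le
      · rw [hval i' (by omega) hne']
        exact norm_beerPoint_anti K q π hq hπ hunif hS hii' hi'j hj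
  have hnmono' : ∀ i i', j ≤ i → i ≤ i' → i' ≤ n → ‖(x i : K) - c‖ ≤ ‖(x i' : K) - c‖ := by
    intro i i' hji hii' hi'n
    rcases eq_or_lt_of_le hii' with rfl | hlt
    · exact le_rfl
    · have hi'j : i' ≠ j := by omega
      have hi' : i' < q ^ lam := by omega
      rw [hval i' hi' hi'j]
      rcases eq_or_ne i j with rfl | hne'
      · exact hxj.trans (hgt i' hi' hi'j).le
      · rw [hval i (by omega) hne']
        exact norm_beerPoint_mono K q π hq hπ hunif hS hji hii' hi'
  set w : ℕ → ℝ := fun i => ‖(x i : K) - (c : K)‖ ^ t with hw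
  have h1 : ∀ i i', i ≤ i' → i' ≤ j → w i' ≤ w i := fun i i' hii' hi'j =>
    Real.rpow_le_rpow (norm_nonneg _) (hnmono i i' hii' hi'j) ht.le
  have h2 : ∀ i i', j ≤ i → i ≤ i' → i' ≤ n → w i ≤ w i' := fun i i' hji hii' hi'n =>
    Real.rpow_le_rpow (norm_nonneg _) (hnmono' i i' hji hii' hi'n) ht.le
  rw [← ENNReal.ofReal_sum_of_nonneg (fun i _ => abs_nonneg _), ← hn1,
    sum_abs_unimodal w j n hjn h1 h2]

end Core
section Bounds

variable {S : ℕ → RoI K}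

lemma VBeerLevel_le (hq : 1 < q) (hπ : ‖(π : K)‖ = (q : ℝ)⁻¹)
    (hunif : ∀ x : RoI K, ‖(x : K)‖ < 1 → ‖(x : K)‖ ≤ ‖(π : K)‖)
    (hS : IsRepSystem K q π S) (c : RoI K) {t : ℝ} (ht : 0 < t) (lam : ℕ) :
    VBeerLevel K q π S (fun x => ‖(x : K) - (c : K)‖ ^ t) lam ≤
      ENNReal.ofReal (‖(S 0 : K) / (1 - (π : K)) - (c : K)‖ ^ t +
        ‖(S (q - 1) : K) / (1 - (π : K)) - (c : K)‖ ^ t) := by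
  obtain ⟨j, hj, hcj⟩ := exists_beer_index K q π hq hπ hS lam c
  rw [VBeerLevel]
  refine iSup_le fun x => ?_
  rw [sum_abs_f_eq K q π hq hπ hunif hS c t ht hj hcj x.1 x.2]
  refine ENNReal.ofReal_le_ofReal ?_
  have hpow : 0 < q ^ lam := Nat.pow_pos (by omega)
  have hn : q ^ lam - 1 < q ^ lam := by omega
  have hA : ‖(x.1 0 : K) - (c : K)‖ ^ t - ‖(x.1 j : K) - (c : K)‖ ^ t ≤
      ‖(S 0 : K) / (1 - (π : K)) - (c : K)‖ ^ t := by
    rcases eq_or_ne j 0 with rfl | hj0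
    · rw [sub_self]
      exact Real.rpow_nonneg (norm_nonneg _) t
    · have e1 : ‖(x.1 0 : K) - (c : K)‖ =
          ‖(beerPoint K q π S lam 0 : K) - beerPoint K q π S lam j‖ :=
        norm_pert K q π hq hπ hunif hS hpow hj (Ne.symm hj0)
          ((mem_disc_iff K q).mp (x.2 0 hpow)) hcj
      have e2 : ‖(S 0 : K) / (1 - (π : K)) - (c : K)‖ =
          ‖(beerPoint K q π S lam 0 : K) - beerPoint K q π S lam j‖ :=
        norm_pert K q π hq hπ hunif hS hpow hj (Ne.symm hj0)
          (norm_fixedPoint_sub K q π hq hπ fun r hr => by simp) hcj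
      rw [e1, ← e2]
      have := Real.rpow_nonneg (norm_nonneg ((x.1 j : K) - (c : K))) t
      linarith
  have hB : ‖(x.1 (q ^ lam - 1) : K) - (c : K)‖ ^ t - ‖(x.1 j : K) - (c : K)‖ ^ t ≤
      ‖(S (q - 1) : K) / (1 - (π : K)) - (c : K)‖ ^ t := by
    rcases eq_or_ne j (q ^ lam - 1) with rfl | hjn
    · rw [sub_self]
      exact Real.rpow_nonneg (norm_nonneg _) t
    · have e1 : ‖(x.1 (q ^ lam - 1) : K) - (c : K)‖ =
          ‖(beerPoint K q π S lam (q ^ lam - 1) : K) - beerPoint K q π S lam j‖ :=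
        norm_pert K q π hq hπ hunif hS hn hj (Ne.symm hjn)
          ((mem_disc_iff K q).mp (x.2 _ hn)) hcj
      have e2 : ‖(S (q - 1) : K) / (1 - (π : K)) - (c : K)‖ =
          ‖(beerPoint K q π S lam (q ^ lam - 1) : K) - beerPoint K q π S lam j‖ :=
        norm_pert K q π hq hπ hunif hS hn hj (Ne.symm hjn)
          (norm_fixedPoint_sub K q π hq hπ fun r hr => digits_last q hq hr) hcj
      rw [e1, ← e2]
      have := Real.rpow_nonneg (norm_nonneg ((x.1 j : K) - (c : K))) t
      linarith
  linarith

lemma le_VBeerLevel (hq : 1 < q) (hπ : ‖(π : K)‖ = (q : ℝ)⁻¹)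
    (hunif : ∀ x : RoI K, ‖(x : K)‖ < 1 → ‖(x : K)‖ ≤ ‖(π : K)‖)
    (hS : IsRepSystem K q π S) (c : RoI K) {t : ℝ} (ht : 0 < t) (lam : ℕ)
    (hA : (c : K) = (S 0 : K) / (1 - (π : K)) ∨
      ((q : ℝ)⁻¹) ^ lam < ‖(S 0 : K) / (1 - (π : K)) - (c : K)‖)
    (hB : (c : K) = (S (q - 1) : K) / (1 - (π : K)) ∨
      ((q : ℝ)⁻¹) ^ lam < ‖(S (q - 1) : K) / (1 - (π : K)) - (c : K)‖) :
    ENNReal.ofReal (‖(S 0 : K) / (1 - (π : K)) - (c : K)‖ ^ t +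
        ‖(S (q - 1) : K) / (1 - (π : K)) - (c : K)‖ ^ t) ≤
      VBeerLevel K q π S (fun x => ‖(x : K) - (c : K)‖ ^ t) lam := by
  classical
  obtain ⟨j, hj, hcj⟩ := exists_beer_index K q π hq hπ hS lam c
  have hpow : 0 < q ^ lam := Nat.pow_pos (by omega)
  have hn : q ^ lam - 1 < q ^ lam := by omega
  set x : ℕ → RoI K := fun i => if i = j then c else beerPoint K q π S lam i with hxdef
  have hadm : ∀ i < q ^ lam, x i ∈ disc K q (beerPoint K q π S lam i) lam := by
    intro i hi
    rw [mem_disc_iff]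
    by_cases h : i = j
    · subst h
      simp only [hxdef, if_pos rfl]
      exact hcj
    · simp only [hxdef, if_neg h, sub_self, norm_zero]
      positivity
  rw [VBeerLevel]
  refine le_iSup_of_le ⟨x, hadm⟩ ?_
  rw [sum_abs_f_eq K q π hq hπ hunif hS c t ht hj hcj x hadm]
  refine le_of_eq (congrArg ENNReal.ofReal ?_)
  have hwj : ‖(x j : K) - (c : K)‖ ^ t = 0 := by
    simp only [hxdef, if_pos rfl, sub_self, norm_zero]
    exact Real.zero_rpow ht.ne'
  have hw0 : ‖(x 0 : K) - (c : K)‖ ^ t = ‖(S 0 : K) / (1 - (π : K)) - (c : K)‖ ^ t := by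
    rcases eq_or_ne j 0 with rfl | hj0
    · have hceq : (c : K) = (S 0 : K) / (1 - (π : K)) := by
        rcases hA with h | h
        · exact h
        · exfalso
          refine absurd h (not_lt.mpr ?_)
          have e : (S 0 : K) / (1 - (π : K)) - (c : K) =
              ((S 0 : K) / (1 - (π : K)) - beerPoint K q π S lam 0)
                + -((c : K) - beerPoint K q π S lam 0) := by ring
          rw [e]
          refine (IsUltrametricDist.norm_add_le_max _ _).trans
            (max_le (norm_fixedPoint_sub K q π hq hπ fun r hr => by simp) ?_)
          rw [norm_neg]
          exact hcj
      simp only [hxdef, if_pos rfl]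
      rw [hceq]
    · have hx0 : x 0 = beerPoint K q π S lam 0 := by
        simp only [hxdef, if_neg (Ne.symm hj0)]
      rw [hx0]
      congr 1
      have e1 : ‖(beerPoint K q π S lam 0 : K) - (c : K)‖ =
          ‖(beerPoint K q π S lam 0 : K) - beerPoint K q π S lam j‖ :=
        norm_pert K q π hq hπ hunif hS hpow hj (Ne.symm hj0)
          (by simp only [sub_self, norm_zero]; positivity) hcj
      have e2 : ‖(S 0 : K) / (1 - (π : K)) - (c : K)‖ =
          ‖(beerPoint K q π S lam 0 : K) - beerPoint K q π S lam j‖ :=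
        norm_pert K q π hq hπ hunif hS hpow hj (Ne.symm hj0)
          (norm_fixedPoint_sub K q π hq hπ fun r hr => by simp) hcj
      rw [e1, ← e2]
  have hwn : ‖(x (q ^ lam - 1) : K) - (c : K)‖ ^ t =
      ‖(S (q - 1) : K) / (1 - (π : K)) - (c : K)‖ ^ t := by
    rcases eq_or_ne j (q ^ lam - 1) with rfl | hjn
    · have hceq : (c : K) = (S (q - 1) : K) / (1 - (π : K)) := by
        rcases hB with h | h
        · exact h
        · exfalso
          refine absurd h (not_lt.mpr ?_)
          have e : (S (q - 1) : K) / (1 - (π : K)) - (c : K) =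
              ((S (q - 1) : K) / (1 - (π : K)) - beerPoint K q π S lam (q ^ lam - 1))
                + -((c : K) - beerPoint K q π S lam (q ^ lam - 1)) := by ring
          rw [e]
          refine (IsUltrametricDist.norm_add_le_max _ _).trans
            (max_le (norm_fixedPoint_sub K q π hq hπ fun r hr => digits_last q hq hr) ?_)
          rw [norm_neg]
          exact hcj
      simp only [hxdef, if_pos rfl]
      rw [hceq]
    · have hxn : x (q ^ lam - 1) = beerPoint K q π S lam (q ^ lam - 1) := by
        simp only [hxdef, if_neg (Ne.symm hjn)]
      rw [hxn]
      congr 1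
      have e1 : ‖(beerPoint K q π S lam (q ^ lam - 1) : K) - (c : K)‖ =
          ‖(beerPoint K q π S lam (q ^ lam - 1) : K) - beerPoint K q π S lam j‖ :=
        norm_pert K q π hq hπ hunif hS hn hj (Ne.symm hjn)
          (by simp only [sub_self, norm_zero]; positivity) hcj
      have e2 : ‖(S (q - 1) : K) / (1 - (π : K)) - (c : K)‖ =
          ‖(beerPoint K q π S lam (q ^ lam - 1) : K) - beerPoint K q π S lam j‖ :=
        norm_pert K q π hq hπ hunif hS hn hj (Ne.symm hjn)
          (norm_fixedPoint_sub K q π hq hπ fun r hr => digits_last q hq hr) hcj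
      rw [e1, ← e2]
  rw [hwj, hw0, hwn]
  ring

end Bounds

theorem VBeer_dist_rpow
    (hq : 1 < q)
    (hπ : ‖(π : K)‖ = (q : ℝ)⁻¹)
    (hunif : ∀ x : RoI K, ‖(x : K)‖ < 1 → ‖(x : K)‖ ≤ ‖(π : K)‖)
    (hres : Nat.card (↥(RoI K) ⧸ (Ideal.span {π} : Ideal ↥(RoI K))) = q)
    (S : ℕ → RoI K) (hS : IsRepSystem K q π S)
    (c : RoI K) (t : ℝ) (ht : 0 < t) :
    VBeer K q π S (fun x => ‖(x : K) - (c : K)‖ ^ t) =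
        ENNReal.ofReal (‖(S 0 : K) / (1 - (π : K)) - (c : K)‖ ^ t +
          ‖(S (q - 1) : K) / (1 - (π : K)) - (c : K)‖ ^ t) ∧
      1 ≤ VBeer K q π S (fun x => ‖(x : K) - (c : K)‖ ^ t) ∧
      VBeer K q π S (fun x => ‖(x : K) - (c : K)‖ ^ t) ≤ 2 ∧
      (VBeer K q π S (fun x => ‖(x : K) - (c : K)‖ ^ t) = 1 ↔
        (c : K) = (S 0 : K) / (1 - (π : K)) ∨ (c : K) = (S (q - 1) : K) / (1 - (π : K))) := by
  set α : K := (S 0 : K) / (1 - (π : K)) with hα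
  set β : K := (S (q - 1) : K) / (1 - (π : K)) with hβ
  have hqinv1 : ((q : ℝ)⁻¹) < 1 := by
    rw [inv_lt_one_iff₀]; right; exact_mod_cast hq
  have hqinv0 : (0 : ℝ) < (q : ℝ)⁻¹ := by positivity
  have hmain : VBeer K q π S (fun x => ‖(x : K) - (c : K)‖ ^ t)
      = ENNReal.ofReal (‖α - (c : K)‖ ^ t + ‖β - (c : K)‖ ^ t) := by
    refine le_antisymm ?_ ?_
    · rw [VBeer]
      exact iSup_le fun lam => VBeerLevel_le K q π hq hπ hunif hS c ht (lam + 1)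
    · have h1 : ∃ n1 : ℕ, (c : K) = α ∨ ((q : ℝ)⁻¹) ^ n1 < ‖α - (c : K)‖ := by
        rcases eq_or_ne ((c : K)) α with h | h
        · exact ⟨0, Or.inl h⟩
        · obtain ⟨n1, hn1⟩ := exists_pow_lt_of_lt_one
            (show (0:ℝ) < ‖α - (c : K)‖ by
              rw [norm_pos_iff]; exact sub_ne_zero_of_ne (Ne.symm h)) hqinv1
          exact ⟨n1, Or.inr hn1⟩
      have h2 : ∃ n2 : ℕ, (c : K) = β ∨ ((q : ℝ)⁻¹) ^ n2 < ‖β - (c : K)‖ := by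
        rcases eq_or_ne ((c : K)) β with h | h
        · exact ⟨0, Or.inl h⟩
        · obtain ⟨n2, hn2⟩ := exists_pow_lt_of_lt_one
            (show (0:ℝ) < ‖β - (c : K)‖ by
              rw [norm_pos_iff]; exact sub_ne_zero_of_ne (Ne.symm h)) hqinv1
          exact ⟨n2, Or.inr hn2⟩
      obtain ⟨n1, h1⟩ := h1
      obtain ⟨n2, h2⟩ := h2
      have hmono : ∀ m n : ℕ, m ≤ n → ((q : ℝ)⁻¹) ^ n ≤ ((q : ℝ)⁻¹) ^ m :=
        fun m n h => pow_le_pow_of_le_one hqinv0.le hqinv1.le h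
      set N := max n1 n2 with hN
      have hA : (c : K) = α ∨ ((q : ℝ)⁻¹) ^ (N + 1) < ‖α - (c : K)‖ := by
        rcases h1 with h | h
        · exact Or.inl h
        · exact Or.inr (lt_of_le_of_lt (hmono n1 (N + 1) (by omega)) h)
      have hB : (c : K) = β ∨ ((q : ℝ)⁻¹) ^ (N + 1) < ‖β - (c : K)‖ := by
        rcases h2 with h | h
        · exact Or.inl h
        · exact Or.inr (lt_of_le_of_lt (hmono n2 (N + 1) (by omega)) h)
      rw [VBeer]
      exact le_iSup_of_le N (le_VBeerLevel K q π hq hπ hunif hS c ht (N + 1) hA hB)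
  have hαβ : ‖α - β‖ = 1 := by
    rw [hα, hβ, div_sub_div_same, norm_div, norm_one_sub_pi K q π hq hπ, div_one]
    exact norm_S_sub_S K q π hq hπ hunif hS (by omega) (by omega) (by omega)
  have hα1 : ‖α - (c : K)‖ ≤ 1 := by
    have hαle : ‖α‖ ≤ 1 := by
      rw [hα, norm_div, norm_one_sub_pi K q π hq hπ, div_one]
      exact norm_coe_le_one K _
    rw [sub_eq_add_neg]
    refine (IsUltrametricDist.norm_add_le_max _ _).trans (max_le hαle ?_)
    rw [norm_neg]; exact c.2
  have hβ1 : ‖β - (c : K)‖ ≤ 1 := by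
    have hβle : ‖β‖ ≤ 1 := by
      rw [hβ, norm_div, norm_one_sub_pi K q π hq hπ, div_one]
      exact norm_coe_le_one K _
    rw [sub_eq_add_neg]
    refine (IsUltrametricDist.norm_add_le_max _ _).trans (max_le hβle ?_)
    rw [norm_neg]; exact c.2
  have hmax : ‖α - (c : K)‖ = 1 ∨ ‖β - (c : K)‖ = 1 := by
    have h := IsUltrametricDist.norm_add_le_max (α - (c : K)) (-(β - (c : K)))
    have e : (α - (c : K)) + -(β - (c : K)) = α - β := by ring
    rw [e, norm_neg, hαβ] at h
    rcases le_total ‖α - (c : K)‖ ‖β - (c : K)‖ with hh | hh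
    · right
      refine le_antisymm hβ1 ?_
      rw [max_eq_right hh] at h
      exact h
    · left
      refine le_antisymm hα1 ?_
      rw [max_eq_left hh] at h
      exact h
  have hA0 : 0 ≤ ‖α - (c : K)‖ ^ t := Real.rpow_nonneg (norm_nonneg _) t
  have hB0 : 0 ≤ ‖β - (c : K)‖ ^ t := Real.rpow_nonneg (norm_nonneg _) t
  have hAle : ‖α - (c : K)‖ ^ t ≤ 1 := Real.rpow_le_one (norm_nonneg _) hα1 ht.le
  have hBle : ‖β - (c : K)‖ ^ t ≤ 1 := Real.rpow_le_one (norm_nonneg _) hβ1 ht.le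
  refine ⟨hmain, ?_, ?_, ?_⟩
  · rw [hmain, ENNReal.one_le_ofReal]
    rcases hmax with h | h
    · have : ‖α - (c : K)‖ ^ t = 1 := by rw [h, Real.one_rpow]
      linarith
    · have : ‖β - (c : K)‖ ^ t = 1 := by rw [h, Real.one_rpow]
      linarith
  · rw [hmain]
    calc ENNReal.ofReal (‖α - (c : K)‖ ^ t + ‖β - (c : K)‖ ^ t)
        ≤ ENNReal.ofReal 2 := ENNReal.ofReal_le_ofReal (by linarith)
      _ = 2 := by norm_num
  · rw [hmain]
    constructor
    · intro h
      rw [ENNReal.ofReal_eq_one] at h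
      have hzero : ∀ u : K, ‖u - (c : K)‖ ^ t = 0 → (c : K) = u := by
        intro u hu
        have h0 : ‖u - (c : K)‖ = 0 := by
          by_contra hne
          have hpos : 0 < ‖u - (c : K)‖ :=
            lt_of_le_of_ne (norm_nonneg _) (Ne.symm hne)
          have := Real.rpow_pos_of_pos hpos t
          linarith
        exact (sub_eq_zero.mp (norm_eq_zero.mp h0)).symm
      rcases hmax with h1 | h1
      · right
        refine hzero β ?_
        have : ‖α - (c : K)‖ ^ t = 1 := by rw [h1, Real.one_rpow]
        linarith
      · left
        refine hzero α ?_
        have : ‖β - (c : K)‖ ^ t = 1 := by rw [h1, Real.one_rpow]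
        linarith
    · rintro (h | h)
      · rw [ENNReal.ofReal_eq_one]
        have h1 : ‖α - (c : K)‖ = 0 := by rw [h, sub_self, norm_zero]
        have h2 : ‖β - (c : K)‖ = 1 := by rw [h, norm_sub_rev]; exact hαβ
        rw [h1, h2, Real.zero_rpow ht.ne', Real.one_rpow]
        norm_num
      · rw [ENNReal.ofReal_eq_one]
        have h1 : ‖β - (c : K)‖ = 0 := by rw [h, sub_self, norm_zero]
        have h2 : ‖α - (c : K)‖ = 1 := by rw [h]; exact hαβ
        rw [h1, h2, Real.zero_rpow ht.ne', Real.one_rpow]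
        norm_num

end NAKoksma
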